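/- Let X ⊂ ℝ be a compact interval, let κ be a continuous strictly concave real function defined on an interval containing {x + y : x, y ∈ X}, and let f₀ be a Borel probability measure with support equal to X. Then every minimizer γ* of γ ↦ ∫_{X×X} κ(x + y) dγ(x, y) over the set Γ_{f₀,f₀} of Borel measures on X × X with both marginals equal to f₀ has support contained in the diagonal {(x, x) : x ∈ X}, and the minimum value equals ∫_X κ(2x) df₀(x). -/

import Mathlib

open MeasureTheory Real Set

theorem stmt9 (a b : ℝ) (hab : a ≤ b) (I : Set ℝ)
    (κ : ℝ → ℝ) (hκcont : ContinuousOn κ I) (hκ : StrictConcaveOn ℝ I κ)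
    (hsum : ∀ x ∈ Set.Icc a b, ∀ y ∈ Set.Icc a b, x + y ∈ I)
    (f₀ : Measure ℝ) [IsProbabilityMeasure f₀]
    (hsupp : {x : ℝ | ∀ ε > 0, 0 < f₀ (Metric.ball x ε)} = Set.Icc a b)
    (γstar : Measure (ℝ × ℝ))
    (hγ₁ : γstar.map Prod.fst = f₀) (hγ₂ : γstar.map Prod.snd = f₀)
    (hmin : ∀ γ : Measure (ℝ × ℝ), γ.map Prod.fst = f₀ → γ.map Prod.snd = f₀ →
      ∫ p, κ (p.1 + p.2) ∂γstar ≤ ∫ p, κ (p.1 + p.2) ∂γ) :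
    γstar {p : ℝ × ℝ | p.1 ≠ p.2} = 0 ∧
    ∫ p, κ (p.1 + p.2) ∂γstar = ∫ x, κ (2 * x) ∂f₀ := by
  set S : Set ℝ := Set.Icc a b with hSdef
  have hmS : MeasurableSet S := measurableSet_Icc
  -- f₀ vanishes outside S
  have hf₀S : f₀ Sᶜ = 0 := by
    apply measure_null_of_locally_null
    intro x hx
    have hx' : x ∉ S := hx
    rw [← hsupp] at hx'
    simp only [Set.mem_setOf_eq] at hx'
    push_neg at hx'
    obtain ⟨ε, hε, h0⟩ := hx'
    exact ⟨Metric.ball x ε, mem_nhdsWithin_of_mem_nhds (Metric.ball_mem_nhds x hε),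
      le_antisymm h0 zero_le⟩
  have haef : ∀ᵐ x ∂f₀, x ∈ S := by
    rw [ae_iff]
    exact hf₀S
  -- the modified kernel κ'
  have h2ab : 2*a ≤ 2*b := by linarith
  set K : Set ℝ := Set.Icc (2*a) (2*b) with hKdef
  have hKsubI : K ⊆ I := by
    intro t ht
    obtain ⟨ht1, ht2⟩ := ht
    have h : t/2 ∈ S := ⟨by linarith, by linarith⟩
    have := hsum (t/2) h (t/2) h
    simpa [add_halves] using this
  set proj : ℝ → ℝ := fun t => max (2*a) (min t (2*b)) with hprojdef
  have hproj_mem : ∀ t, proj t ∈ K := by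
    intro t
    refine ⟨le_max_left _ _, max_le h2ab (min_le_right _ _)⟩
  have hproj_cont : Continuous proj := continuous_const.max (continuous_id.min continuous_const)
  set κ' : ℝ → ℝ := fun t => κ (proj t) with hκ'def
  have hκ'cont : Continuous κ' := (hκcont.mono hKsubI).comp_continuous hproj_cont hproj_mem
  have hκ'eq : ∀ t ∈ K, κ' t = κ t := by
    intro t ht
    obtain ⟨ht1, ht2⟩ := ht
    simp only [hκ'def, hprojdef]
    rw [min_eq_left ht2, max_eq_right ht1]
  obtain ⟨C, hC⟩ := (isCompact_Icc (a := 2*a) (b := 2*b)).exists_bound_of_continuousOn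
    (hκcont.mono hKsubI)
  have hκ'bound : ∀ t, ‖κ' t‖ ≤ C := fun t => hC _ (hproj_mem t)
  -- membership facts
  have hsum_mem : ∀ x ∈ S, ∀ y ∈ S, x + y ∈ K := by
    intro x hx y hy
    exact ⟨by simp only [hSdef, Set.mem_Icc] at hx hy; linarith [hx.1, hy.1],
      by simp only [hSdef, Set.mem_Icc] at hx hy; linarith [hx.2, hy.2]⟩
  have h2mem : ∀ x ∈ S, 2*x ∈ K := by
    intro x hx
    have := hsum_mem x hx x hx
    simpa [two_mul] using this
  -- concavity inequalities
  have hconc : ∀ x ∈ S, ∀ y ∈ S, (κ (2*x) + κ (2*y))/2 ≤ κ (x + y) := by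
    intro x hx y hy
    have h := hκ.concaveOn.2 (hKsubI (h2mem x hx)) (hKsubI (h2mem y hy))
      (by norm_num : (0:ℝ) ≤ 1/2) (by norm_num : (0:ℝ) ≤ 1/2) (by norm_num)
    simp only [smul_eq_mul] at h
    have he : (1/2:ℝ) * (2*x) + (1/2)*(2*y) = x + y := by ring
    rw [he] at h
    linarith
  have hsconc : ∀ x ∈ S, ∀ y ∈ S, x ≠ y → (κ (2*x) + κ (2*y))/2 < κ (x + y) := by
    intro x hx y hy hne
    have h2ne : (2*x : ℝ) ≠ 2*y := by intro h; apply hne; linarith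
    have h := hκ.2 (hKsubI (h2mem x hx)) (hKsubI (h2mem y hy)) h2ne
      (by norm_num : (0:ℝ) < 1/2) (by norm_num : (0:ℝ) < 1/2) (by norm_num)
    simp only [smul_eq_mul] at h
    have he : (1/2:ℝ) * (2*x) + (1/2)*(2*y) = x + y := by ring
    rw [he] at h
    linarith
  -- γstar is a probability measure concentrated on S ×ˢ S
  have hγuniv : γstar Set.univ = 1 := by
    have h := congrArg (fun μ : Measure ℝ => μ Set.univ) hγ₁
    simp only [Measure.map_apply measurable_fst MeasurableSet.univ] at h
    simpa using h
  haveI : IsProbabilityMeasure γstar := ⟨hγuniv⟩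
  have hγcompl : γstar ((S ×ˢ S)ᶜ) = 0 := by
    have h1 : γstar (Prod.fst ⁻¹' Sᶜ) = 0 := by
      rw [← Measure.map_apply measurable_fst hmS.compl, hγ₁]; exact hf₀S
    have h2 : γstar (Prod.snd ⁻¹' Sᶜ) = 0 := by
      rw [← Measure.map_apply measurable_snd hmS.compl, hγ₂]; exact hf₀S
    have hsub : (S ×ˢ S)ᶜ ⊆ Prod.fst ⁻¹' Sᶜ ∪ Prod.snd ⁻¹' Sᶜ := by
      intro p hp
      simp only [Set.mem_compl_iff, Set.mem_prod, not_and_or] at hp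
      simpa using hp
    exact measure_mono_null hsub (measure_union_null h1 h2)
  have haeγ : ∀ᵐ p ∂γstar, p ∈ S ×ˢ S := by
    rw [ae_iff]
    exact hγcompl
  -- integrability
  have hintF : Integrable (fun p : ℝ × ℝ => κ' (p.1 + p.2)) γstar :=
    (integrable_const C).mono'
      (hκ'cont.comp (continuous_fst.add continuous_snd)).aestronglyMeasurable
      (ae_of_all _ fun p => hκ'bound _)
  have hintG1 : Integrable (fun p : ℝ × ℝ => κ' (2*p.1)) γstar :=
    (integrable_const C).mono'
      (hκ'cont.comp (continuous_const.mul continuous_fst)).aestronglyMeasurable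
      (ae_of_all _ fun p => hκ'bound _)
  have hintG2 : Integrable (fun p : ℝ × ℝ => κ' (2*p.2)) γstar :=
    (integrable_const C).mono'
      (hκ'cont.comp (continuous_const.mul continuous_snd)).aestronglyMeasurable
      (ae_of_all _ fun p => hκ'bound _)
  have hintG : Integrable (fun p : ℝ × ℝ => (κ' (2*p.1) + κ' (2*p.2))/2) γstar :=
    (hintG1.add hintG2).div_const 2
  -- marginal integrals
  have hcont2 : Continuous fun x : ℝ => κ' (2*x) := hκ'cont.comp (continuous_const.mul continuous_id)
  have hG1 : ∫ p, κ' (2*p.1) ∂γstar = ∫ x, κ' (2*x) ∂f₀ := by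
    rw [← hγ₁, integral_map measurable_fst.aemeasurable hcont2.aestronglyMeasurable]
  have hG2 : ∫ p, κ' (2*p.2) ∂γstar = ∫ x, κ' (2*x) ∂f₀ := by
    rw [← hγ₂, integral_map measurable_snd.aemeasurable hcont2.aestronglyMeasurable]
  set B : ℝ := ∫ x, κ' (2*x) ∂f₀ with hBdef
  have hGint : ∫ p, (κ' (2*p.1) + κ' (2*p.2))/2 ∂γstar = B := by
    rw [integral_div, integral_add hintG1 hintG2, hG1, hG2]
    ring
  -- rewrite the objective in terms of κ'
  have hAeq : ∫ p, κ (p.1 + p.2) ∂γstar = ∫ p, κ' (p.1 + p.2) ∂γstar := by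
    refine integral_congr_ae (haeγ.mono fun p hp => ?_)
    exact (hκ'eq _ (hsum_mem _ hp.1 _ hp.2)).symm
  -- the diagonal coupling
  have hd_meas : Measurable (fun x : ℝ => (x, x)) := measurable_id.prodMk measurable_id
  set γd : Measure (ℝ × ℝ) := f₀.map (fun x => (x, x)) with hγddef
  have hd1 : γd.map Prod.fst = f₀ := by
    rw [hγddef, Measure.map_map measurable_fst hd_meas]
    simp [Function.comp_def]
  have hd2 : γd.map Prod.snd = f₀ := by
    rw [hγddef, Measure.map_map measurable_snd hd_meas]
    simp [Function.comp_def]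
  have haeγd : ∀ᵐ p ∂γd, p ∈ S ×ˢ S := by
    rw [ae_iff]
    have : γd {p : ℝ × ℝ | ¬ p ∈ S ×ˢ S} = 0 := by
      rw [hγddef, Measure.map_apply hd_meas]
      · refine measure_mono_null ?_ hf₀S
        intro x hx
        simp only [Set.mem_preimage, Set.mem_setOf_eq, Set.mem_prod] at hx
        simp only [Set.mem_compl_iff]
        tauto
      · exact (hmS.prod hmS).compl
    exact this
  have hγdval : ∫ p, κ (p.1 + p.2) ∂γd = B := by
    have e1 : ∫ p, κ (p.1 + p.2) ∂γd = ∫ p, κ' (p.1 + p.2) ∂γd := by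
      refine integral_congr_ae (haeγd.mono fun p hp => ?_)
      exact (hκ'eq _ (hsum_mem _ hp.1 _ hp.2)).symm
    have hcontF : Continuous fun p : ℝ × ℝ => κ' (p.1 + p.2) :=
      hκ'cont.comp (continuous_fst.add continuous_snd)
    have e2 : ∫ p, κ' (p.1 + p.2) ∂γd = ∫ x, κ' (x + x) ∂f₀ := by
      rw [hγddef, integral_map hd_meas.aemeasurable hcontF.aestronglyMeasurable]
    rw [e1, e2, hBdef]
    refine integral_congr_ae (ae_of_all _ fun x => ?_)
    show κ' (x + x) = κ' (2 * x)
    rw [two_mul]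
  -- A ≤ B from minimality, B ≤ A from concavity
  have hFG_ae : ∀ᵐ p ∂γstar, (κ' (2*p.1) + κ' (2*p.2))/2 ≤ κ' (p.1 + p.2) := by
    refine haeγ.mono fun p hp => ?_
    rw [hκ'eq _ (hsum_mem _ hp.1 _ hp.2), hκ'eq _ (h2mem _ hp.1), hκ'eq _ (h2mem _ hp.2)]
    exact hconc _ hp.1 _ hp.2
  have hBleA : B ≤ ∫ p, κ' (p.1 + p.2) ∂γstar := by
    rw [← hGint]
    exact integral_mono_ae hintG hintF hFG_ae
  have hAleB : ∫ p, κ' (p.1 + p.2) ∂γstar ≤ B := by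
    rw [← hAeq, ← hγdval]
    exact hmin γd hd1 hd2
  have hAB : ∫ p, κ' (p.1 + p.2) ∂γstar = B := le_antisymm hAleB hBleA
  -- the difference has zero integral, is nonneg a.e., hence zero a.e.
  have hdiff0 : ∫ p, (κ' (p.1 + p.2) - (κ' (2*p.1) + κ' (2*p.2))/2) ∂γstar = 0 := by
    rw [integral_sub hintF hintG, hAB, hGint, sub_self]
  have hnn : 0 ≤ᵐ[γstar] fun p : ℝ × ℝ => κ' (p.1 + p.2) - (κ' (2*p.1) + κ' (2*p.2))/2 :=
    hFG_ae.mono fun p hp => by simp only [Pi.zero_apply]; linarith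
  have hzero : (fun p : ℝ × ℝ => κ' (p.1 + p.2) - (κ' (2*p.1) + κ' (2*p.2))/2) =ᵐ[γstar] 0 :=
    (integral_eq_zero_iff_of_nonneg_ae hnn (hintF.sub hintG)).mp hdiff0
  have hdiag : ∀ᵐ p ∂γstar, p.1 = p.2 := by
    filter_upwards [haeγ, hzero] with p hp hz
    by_contra hne
    have hlt := hsconc _ hp.1 _ hp.2 hne
    rw [← hκ'eq _ (hsum_mem _ hp.1 _ hp.2), ← hκ'eq _ (h2mem _ hp.1),
      ← hκ'eq _ (h2mem _ hp.2)] at hlt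
    simp only [Pi.zero_apply] at hz
    linarith
  constructor
  · have := ae_iff.mp hdiag
    simpa using this
  · have hBf : ∫ x, κ (2*x) ∂f₀ = B := by
      rw [hBdef]
      refine integral_congr_ae (haef.mono fun x hx => ?_)
      exact (hκ'eq _ (h2mem _ hx)).symm
    rw [hAeq, hAB, hBf]
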